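/- There is a constant K such that for all integers n ≥ 3, the product over primes p dividing n of (1 + 1/p) is at most K · log log n. -/

import Mathlib

open Finset Nat

lemma aux_prod_pow_dvd {s : Finset ℕ} (e : ℕ → ℕ) {n : ℕ} :
    (∀ p ∈ s, p.Prime) → (∀ p ∈ s, p ^ e p ∣ n) → (∏ p ∈ s, p ^ e p) ∣ n := by
  induction s using Finset.cons_induction with
  | empty => simp
  | cons q s hq ih =>
    intro hprime hdvd
    rw [Finset.prod_cons]
    have hqp : q.Prime := hprime q (Finset.mem_cons_self _ _)
    have hcop : Nat.Coprime (q ^ e q) (∏ p ∈ s, p ^ e p) := by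
      apply Nat.Coprime.prod_right
      intro p hp
      exact ((Nat.coprime_primes hqp (hprime p (Finset.mem_cons_of_mem hp))).mpr
          (fun h => hq (h ▸ hp))).pow _ _
    exact hcop.mul_dvd_of_dvd_of_dvd (hdvd q (Finset.mem_cons_self _ _))
      (ih (fun p hp => hprime p (Finset.mem_cons_of_mem hp))
          (fun p hp => hdvd p (Finset.mem_cons_of_mem hp)))

-- divisibility: ∏_{p ≤ x} p^(x/p) ∣ x!
lemma aux_prod_pow_dvd_factorial (x : ℕ) :
    (∏ p ∈ Nat.primesBelow (x+1), p ^ (x / p)) ∣ x ! := by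
  apply aux_prod_pow_dvd
  · exact fun p hp => Nat.prime_of_mem_primesBelow hp
  · intro p hp
    have hp' := Nat.prime_of_mem_primesBelow hp
    have hpx : p ≤ x := Nat.lt_succ_iff.mp (Nat.lt_of_mem_primesBelow hp)
    rw [hp'.pow_dvd_factorial_iff (Nat.lt_succ_self _)]
    have h1 : (1 : ℕ) ∈ Finset.Ico 1 (Nat.log p x + 1) := by
      rw [Finset.mem_Ico]
      exact ⟨le_refl _, Nat.succ_lt_succ (Nat.log_pos hp'.one_lt hpx)⟩
    calc x / p = x / p ^ 1 := by rw [pow_one]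
      _ ≤ ∑ i ∈ Finset.Ico 1 (Nat.log p x + 1), x / p ^ i :=
        Finset.single_le_sum (f := fun i => x / p ^ i) (fun i _ => Nat.zero_le _) h1

-- Mertens' first theorem (upper bound)
lemma aux_mertens1 (x : ℕ) (hx : 1 ≤ x) :
    ∑ p ∈ Nat.primesBelow (x+1), Real.log p / p ≤ Real.log x + 2 * Real.log 2 := by
  have hx0 : (0:ℝ) < x := by exact_mod_cast hx
  -- step 1: ∑ (x/p) log p ≤ x log x
  have h1 : ∑ p ∈ Nat.primesBelow (x+1), ((x / p : ℕ) : ℝ) * Real.log p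
      ≤ (x:ℝ) * Real.log x := by
    have hP : (0:ℝ) < (∏ p ∈ Nat.primesBelow (x+1), p ^ (x / p) : ℕ) := by
      have : ∀ p ∈ Nat.primesBelow (x+1), 0 < p ^ (x / p) := fun p hp =>
        pow_pos (Nat.prime_of_mem_primesBelow hp).pos _
      exact_mod_cast Finset.prod_pos this
    have hle : (∏ p ∈ Nat.primesBelow (x+1), p ^ (x / p) : ℕ) ≤ x ^ x :=
      le_trans (Nat.le_of_dvd (Nat.factorial_pos x) (aux_prod_pow_dvd_factorial x))
        (Nat.factorial_le_pow x)
    have hlog : Real.log (∏ p ∈ Nat.primesBelow (x+1), p ^ (x / p) : ℕ)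
        ≤ (x:ℝ) * Real.log x := by
      calc Real.log (∏ p ∈ Nat.primesBelow (x+1), p ^ (x / p) : ℕ)
          ≤ Real.log ((x:ℝ) ^ x) := by
            apply Real.log_le_log hP
            exact_mod_cast hle
        _ = (x:ℝ) * Real.log x := Real.log_pow x x
    rw [show ((∏ p ∈ Nat.primesBelow (x+1), p ^ (x / p) : ℕ) : ℝ)
        = ∏ p ∈ Nat.primesBelow (x+1), (p:ℝ) ^ (x / p) by push_cast; ring] at hlog
    rw [Real.log_prod] at hlog
    · calc ∑ p ∈ Nat.primesBelow (x+1), ((x / p : ℕ) : ℝ) * Real.log p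
          = ∑ p ∈ Nat.primesBelow (x+1), Real.log ((p:ℝ) ^ (x / p)) := by
            refine Finset.sum_congr rfl fun p hp => ?_
            rw [Real.log_pow]
        _ ≤ (x:ℝ) * Real.log x := hlog
    · intro p hp
      have := (Nat.prime_of_mem_primesBelow hp).pos
      positivity
  -- step 2: ∑ log p ≤ 2 x log 2
  have h2 : ∑ p ∈ Nat.primesBelow (x+1), Real.log p ≤ (x:ℝ) * (2 * Real.log 2) := by
    have hQ : (∏ p ∈ Nat.primesBelow (x+1), p) = primorial x := rfl
    have hle : (∏ p ∈ Nat.primesBelow (x+1), p) ≤ 4 ^ x := hQ ▸ primorial_le_4_pow x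
    have hQ0 : (0:ℝ) < (∏ p ∈ Nat.primesBelow (x+1), p : ℕ) := by
      have : ∀ p ∈ Nat.primesBelow (x+1), 0 < p := fun p hp =>
        (Nat.prime_of_mem_primesBelow hp).pos
      exact_mod_cast Finset.prod_pos this
    have hlog : Real.log (∏ p ∈ Nat.primesBelow (x+1), p : ℕ) ≤ (x:ℝ) * (2 * Real.log 2) := by
      calc Real.log (∏ p ∈ Nat.primesBelow (x+1), p : ℕ) ≤ Real.log ((4:ℝ) ^ x) := by
            apply Real.log_le_log hQ0
            exact_mod_cast hle
        _ = (x:ℝ) * Real.log 4 := by rw [Real.log_pow]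
        _ = (x:ℝ) * (2 * Real.log 2) := by
            rw [show (4:ℝ) = 2 ^ 2 by norm_num, Real.log_pow]
            push_cast; ring
    rw [show ((∏ p ∈ Nat.primesBelow (x+1), p : ℕ) : ℝ)
        = ∏ p ∈ Nat.primesBelow (x+1), (p:ℝ) by push_cast; ring] at hlog
    rw [Real.log_prod] at hlog
    · exact hlog
    · intro p hp
      exact_mod_cast (Nat.prime_of_mem_primesBelow hp).pos.ne'
  -- combine: x * ∑ log p / p ≤ ∑ ((x/p)+1) log p ≤ x log x + 2 x log 2
  have key : (x:ℝ) * ∑ p ∈ Nat.primesBelow (x+1), Real.log p / p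
      ≤ (x:ℝ) * Real.log x + (x:ℝ) * (2 * Real.log 2) := by
    rw [Finset.mul_sum]
    calc ∑ p ∈ Nat.primesBelow (x+1), (x:ℝ) * (Real.log p / p)
        ≤ ∑ p ∈ Nat.primesBelow (x+1), (((x / p : ℕ) : ℝ) + 1) * Real.log p := by
          refine Finset.sum_le_sum fun p hp => ?_
          have hp' := Nat.prime_of_mem_primesBelow hp
          have hp0 : (0:ℝ) < p := by exact_mod_cast hp'.pos
          have hlogp : (0:ℝ) ≤ Real.log p := Real.log_natCast_nonneg p
          have hdiv : (x:ℝ) / p ≤ ((x / p : ℕ) : ℝ) + 1 := by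
            rw [div_le_iff₀ hp0]
            have : x < p * (x / p) + p := by
              conv_lhs => rw [← Nat.div_add_mod x p]
              have := Nat.mod_lt x hp'.pos
              omega
            have : (x:ℝ) < (p:ℝ) * ((x / p : ℕ):ℝ) + p := by exact_mod_cast this
            nlinarith
          calc (x:ℝ) * (Real.log p / p) = ((x:ℝ) / p) * Real.log p := by ring
            _ ≤ (((x / p : ℕ) : ℝ) + 1) * Real.log p := by
                exact mul_le_mul_of_nonneg_right hdiv hlogp
      _ = ∑ p ∈ Nat.primesBelow (x+1), ((x / p : ℕ) : ℝ) * Real.log p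
          + ∑ p ∈ Nat.primesBelow (x+1), Real.log p := by
          rw [← Finset.sum_add_distrib]; congr 1; ext p; ring
      _ ≤ (x:ℝ) * Real.log x + (x:ℝ) * (2 * Real.log 2) := add_le_add h1 h2
  nlinarith [key, hx0]

lemma aux_harmonic (m : ℕ) : ∑ j ∈ Finset.Icc 1 m, ((j:ℝ))⁻¹ ≤ 1 + Real.log m := by
  induction m with
  | zero => simp
  | succ m ih =>
    rw [Finset.sum_Icc_succ_top (by omega : 1 ≤ m + 1)]
    rcases Nat.eq_zero_or_pos m with hm | hm
    · subst hm; norm_num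
    · have hm0 : (0:ℝ) < m := by exact_mod_cast hm
      have hm1 : (0:ℝ) < (m:ℝ) + 1 := by linarith
      have hlog : Real.log m - Real.log ((m:ℝ)+1) ≤ -((m:ℝ)+1)⁻¹ := by
        have h := Real.log_le_sub_one_of_pos (show (0:ℝ) < (m:ℝ)/((m:ℝ)+1) by positivity)
        rw [Real.log_div hm0.ne' hm1.ne'] at h
        have : (m:ℝ)/((m:ℝ)+1) - 1 = -((m:ℝ)+1)⁻¹ := by field_simp; ring
        linarith [this ▸ h]
      have : Real.log ((m:ℝ)+1) = Real.log ((m+1 : ℕ):ℝ) := by push_cast; ring_nf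
      rw [← this]
      push_cast
      linarith

lemma aux_telescope (f : ℕ → ℝ) {m K : ℕ} (h : m ≤ K) :
    ∑ j ∈ Finset.Ico m K, (f j - f (j+1)) = f m - f K := by
  rw [Finset.sum_Ico_eq_sub _ h, Finset.sum_range_sub' f, Finset.sum_range_sub' f]
  ring

-- bound on ∑ log p / p over primes below a power bound
lemma aux_A_bound (j : ℕ) (hj : 1 ≤ j) :
    ∑ p ∈ Nat.primesBelow (2 ^ (j+1)), Real.log p / p ≤ ((j:ℝ) + 3) * Real.log 2 := by
  have h2 : (1:ℕ) ≤ 2 ^ (j+1) - 1 := by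
    have : 4 ≤ 2 ^ (j+1) := by
      calc (4:ℕ) = 2 ^ 2 := by norm_num
        _ ≤ 2 ^ (j+1) := Nat.pow_le_pow_right (by norm_num) (by omega)
    omega
  have hx : 2 ^ (j+1) - 1 + 1 = 2 ^ (j+1) := by
    have : 1 ≤ 2 ^ (j+1) := Nat.one_le_two_pow
    omega
  have := aux_mertens1 (2 ^ (j+1) - 1) h2
  rw [hx] at this
  refine le_trans this ?_
  have hle : ((2 ^ (j+1) - 1 : ℕ) : ℝ) ≤ ((2:ℝ) ^ (j+1)) := by
    have : ((2 ^ (j+1) - 1 : ℕ) : ℝ) ≤ ((2 ^ (j+1) : ℕ) : ℝ) := by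
      exact_mod_cast Nat.sub_le _ _
    simpa [push_cast] using le_trans this (by push_cast; ring_nf; exact le_refl _)
  have hpos : (0:ℝ) < ((2 ^ (j+1) - 1 : ℕ) : ℝ) := by exact_mod_cast h2
  have hlog : Real.log ((2 ^ (j+1) - 1 : ℕ) : ℝ) ≤ Real.log ((2:ℝ) ^ (j+1)) :=
    Real.log_le_log hpos hle
  rw [Real.log_pow] at hlog
  push_cast at hlog ⊢
  linarith

lemma aux_mertens2 (K : ℕ) (hK : 1 ≤ K) :
    ∑ p ∈ Nat.primesBelow (2 ^ (K+1)), ((p:ℝ))⁻¹ ≤ 7 + Real.log K := by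
  have hlog2 : (0:ℝ) < Real.log 2 := Real.log_pos (by norm_num)
  set S := Nat.primesBelow (2 ^ (K+1)) with hS
  set b : ℕ → ℝ := fun k => ((k:ℝ) * Real.log 2)⁻¹ with hb
  set c : ℕ → ℝ := fun p => Real.log p / p with hc
  -- facts about primes in S
  have hfacts : ∀ p ∈ S, 1 ≤ Nat.log 2 p ∧ Nat.log 2 p ≤ K ∧ 0 ≤ c p ∧
      (p:ℝ)⁻¹ ≤ c p * b (Nat.log 2 p) := by
    intro p hp
    have hp' := Nat.prime_of_mem_primesBelow hp
    have hplt := Nat.lt_of_mem_primesBelow hp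
    have hk1 : 1 ≤ Nat.log 2 p := Nat.log_pos (by norm_num) hp'.two_le
    have hkK : Nat.log 2 p ≤ K := by
      have h1 : 2 ^ Nat.log 2 p ≤ p := Nat.pow_log_le_self 2 hp'.pos.ne'
      have h2 : 2 ^ Nat.log 2 p < 2 ^ (K+1) := lt_of_le_of_lt h1 hplt
      have := (Nat.pow_lt_pow_iff_right (by norm_num : 1 < 2)).mp h2
      omega
    have hp0 : (0:ℝ) < p := by exact_mod_cast hp'.pos
    have hlogp : ((Nat.log 2 p : ℝ)) * Real.log 2 ≤ Real.log p := by
      have h1 : 2 ^ Nat.log 2 p ≤ p := Nat.pow_log_le_self 2 hp'.pos.ne'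
      have h1' : ((2:ℝ)) ^ Nat.log 2 p ≤ (p:ℝ) := by exact_mod_cast h1
      have := Real.log_le_log (by positivity) h1'
      rwa [Real.log_pow] at this
    have hlogp0 : (0:ℝ) < Real.log p := Real.log_pos (by exact_mod_cast hp'.one_lt)
    have hcb : (0:ℝ) < ((Nat.log 2 p : ℝ)) * Real.log 2 := by
      have : (0:ℝ) < (Nat.log 2 p : ℝ) := by exact_mod_cast hk1
      positivity
    refine ⟨hk1, hkK, by positivity, ?_⟩
    have hinv : (Real.log p)⁻¹ ≤ b (Nat.log 2 p) := by
      simp only [hb]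
      exact inv_anti₀ hcb hlogp
    calc (p:ℝ)⁻¹ = c p * (Real.log p)⁻¹ := by
          simp only [hc]; field_simp
      _ ≤ c p * b (Nat.log 2 p) := by
          apply mul_le_mul_of_nonneg_left hinv
          positivity
  -- main pointwise + telescope decomposition and swap
  have step1 : ∑ p ∈ S, (p:ℝ)⁻¹ ≤
      ∑ p ∈ S, (c p * b K + ∑ j ∈ Finset.Ico 1 K,
        (if Nat.log 2 p ≤ j then c p * (b j - b (j+1)) else 0)) := by
    refine Finset.sum_le_sum fun p hp => ?_
    obtain ⟨hk1, hkK, hc0, hpb⟩ := hfacts p hp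
    have htel : b (Nat.log 2 p) = b K + ∑ j ∈ Finset.Ico (Nat.log 2 p) K, (b j - b (j+1)) := by
      rw [aux_telescope b hkK]; ring
    have hfilter : Finset.Ico (Nat.log 2 p) K
        = (Finset.Ico 1 K).filter (fun j => Nat.log 2 p ≤ j) := by
      ext j
      simp only [Finset.mem_Ico, Finset.mem_filter]
      omega
    calc (p:ℝ)⁻¹ ≤ c p * b (Nat.log 2 p) := hpb
      _ = c p * b K + ∑ j ∈ Finset.Ico (Nat.log 2 p) K, c p * (b j - b (j+1)) := by
          rw [htel, mul_add, Finset.mul_sum]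
      _ = c p * b K + ∑ j ∈ Finset.Ico 1 K,
            (if Nat.log 2 p ≤ j then c p * (b j - b (j+1)) else 0) := by
          rw [hfilter, Finset.sum_filter]
  -- split and swap
  have step2 : ∑ p ∈ S, (c p * b K + ∑ j ∈ Finset.Ico 1 K,
        (if Nat.log 2 p ≤ j then c p * (b j - b (j+1)) else 0))
      = (∑ p ∈ S, c p) * b K + ∑ j ∈ Finset.Ico 1 K, ∑ p ∈ S,
        (if Nat.log 2 p ≤ j then c p * (b j - b (j+1)) else 0) := by
    rw [Finset.sum_add_distrib, ← Finset.sum_mul, Finset.sum_comm]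
  -- head bound
  have hhead : (∑ p ∈ S, c p) * b K ≤ 4 := by
    have hA : ∑ p ∈ S, c p ≤ ((K:ℝ) + 3) * Real.log 2 := aux_A_bound K hK
    have hA0 : (0:ℝ) ≤ ∑ p ∈ S, c p := Finset.sum_nonneg fun p hp => (hfacts p hp).2.2.1
    have hbK : 0 ≤ b K ∧ b K = ((K:ℝ) * Real.log 2)⁻¹ := ⟨by positivity, rfl⟩
    have hK0 : (0:ℝ) < K := by exact_mod_cast hK
    calc (∑ p ∈ S, c p) * b K ≤ (((K:ℝ) + 3) * Real.log 2) * b K := by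
          exact mul_le_mul_of_nonneg_right hA hbK.1
      _ = ((K:ℝ) + 3) / K := by
          rw [hbK.2]; field_simp
      _ ≤ 4 := by
          have hK1 : (1:ℝ) ≤ K := by exact_mod_cast hK
          rw [div_le_iff₀ hK0]; linarith
  -- per-j bound for the double sum
  have hcol : ∀ j ∈ Finset.Ico 1 K, ∑ p ∈ S,
      (if Nat.log 2 p ≤ j then c p * (b j - b (j+1)) else 0)
      ≤ (j:ℝ)⁻¹ + 2 * ((j:ℝ)⁻¹ - ((j:ℝ)+1)⁻¹) := by
    intro j hj
    rw [Finset.mem_Ico] at hj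
    have hj0 : (0:ℝ) < j := by exact_mod_cast hj.1
    have hj1 : (0:ℝ) < (j:ℝ) + 1 := by linarith
    have hd0 : 0 ≤ b j - b (j+1) := by
      simp only [hb]
      apply sub_nonneg.mpr
      apply inv_anti₀ (by positivity)
      have : ((j:ℝ)) ≤ ((j:ℝ)+1) := by linarith
      push_cast
      nlinarith [hlog2]
    -- sum over the filtered set
    rw [← Finset.sum_filter]
    have hsub : S.filter (fun p => Nat.log 2 p ≤ j) ⊆ Nat.primesBelow (2 ^ (j+1)) := by
      intro p hp
      rw [Finset.mem_filter] at hp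
      have hp' := Nat.prime_of_mem_primesBelow hp.1
      have : p < 2 ^ (Nat.log 2 p + 1) := Nat.lt_pow_succ_log_self (by norm_num) p
      have hle : 2 ^ (Nat.log 2 p + 1) ≤ 2 ^ (j+1) :=
        Nat.pow_le_pow_right (by norm_num) (by omega)
      exact Nat.mem_primesBelow.mpr ⟨by omega, hp'⟩
    have hsum : ∑ p ∈ S.filter (fun p => Nat.log 2 p ≤ j), c p
        ≤ ((j:ℝ) + 3) * Real.log 2 := by
      refine le_trans (Finset.sum_le_sum_of_subset_of_nonneg hsub ?_) (aux_A_bound j hj.1)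
      intro p hp _
      have hp' := Nat.prime_of_mem_primesBelow hp
      have : (0:ℝ) < p := by exact_mod_cast hp'.pos
      have : (0:ℝ) ≤ Real.log p := Real.log_natCast_nonneg p
      simp only [hc]
      positivity
    have hdb : b j - b (j+1) = ((j:ℝ) * ((j:ℝ)+1))⁻¹ * (Real.log 2)⁻¹ := by
      simp only [hb]
      push_cast
      field_simp
      ring
    calc ∑ p ∈ S.filter (fun p => Nat.log 2 p ≤ j), c p * (b j - b (j+1))
        = (∑ p ∈ S.filter (fun p => Nat.log 2 p ≤ j), c p) * (b j - b (j+1)) := by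
          rw [Finset.sum_mul]
      _ ≤ (((j:ℝ) + 3) * Real.log 2) * (b j - b (j+1)) :=
          mul_le_mul_of_nonneg_right hsum hd0
      _ = (j:ℝ)⁻¹ + 2 * ((j:ℝ)⁻¹ - ((j:ℝ)+1)⁻¹) := by
          rw [hdb]
          field_simp
          ring
  -- sum the per-column bounds
  have hcolsum : ∑ j ∈ Finset.Ico 1 K, ∑ p ∈ S,
      (if Nat.log 2 p ≤ j then c p * (b j - b (j+1)) else 0) ≤ 3 + Real.log K := by
    have h1 : ∑ j ∈ Finset.Ico 1 K, ((j:ℝ)⁻¹ + 2 * ((j:ℝ)⁻¹ - ((j:ℝ)+1)⁻¹))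
        = ∑ j ∈ Finset.Ico 1 K, (j:ℝ)⁻¹
          + 2 * ∑ j ∈ Finset.Ico 1 K, ((j:ℝ)⁻¹ - ((j:ℝ)+1)⁻¹) := by
      rw [Finset.sum_add_distrib, Finset.mul_sum]
    have hharm : ∑ j ∈ Finset.Ico 1 K, (j:ℝ)⁻¹ ≤ 1 + Real.log K := by
      refine le_trans (Finset.sum_le_sum_of_subset_of_nonneg
        (by intro j hj; rw [Finset.mem_Ico] at hj; rw [Finset.mem_Icc]; omega)
        (fun j _ _ => by positivity)) (aux_harmonic K)
    have htel2 : ∑ j ∈ Finset.Ico 1 K, ((j:ℝ)⁻¹ - ((j:ℝ)+1)⁻¹) ≤ 1 := by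
      have heq : ∀ j : ℕ, (j:ℝ)⁻¹ - ((j:ℝ)+1)⁻¹
          = (fun k : ℕ => ((k:ℝ))⁻¹) j - (fun k : ℕ => ((k:ℝ))⁻¹) (j+1) := by
        intro j; push_cast; ring
      calc ∑ j ∈ Finset.Ico 1 K, ((j:ℝ)⁻¹ - ((j:ℝ)+1)⁻¹)
          = ∑ j ∈ Finset.Ico 1 K,
            ((fun k : ℕ => ((k:ℝ))⁻¹) j - (fun k : ℕ => ((k:ℝ))⁻¹) (j+1)) := by
            exact Finset.sum_congr rfl fun j _ => heq j
        _ = ((1:ℕ):ℝ)⁻¹ - ((K:ℕ):ℝ)⁻¹ := aux_telescope _ hK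
        _ ≤ 1 := by
            have : (0:ℝ) ≤ ((K:ℕ):ℝ)⁻¹ := by positivity
            simp only [Nat.cast_one, inv_one]
            linarith
    calc ∑ j ∈ Finset.Ico 1 K, ∑ p ∈ S,
        (if Nat.log 2 p ≤ j then c p * (b j - b (j+1)) else 0)
        ≤ ∑ j ∈ Finset.Ico 1 K, ((j:ℝ)⁻¹ + 2 * ((j:ℝ)⁻¹ - ((j:ℝ)+1)⁻¹)) :=
          Finset.sum_le_sum hcol
      _ ≤ (1 + Real.log K) + 2 * 1 := by
          rw [h1]
          have h2' : ∑ j ∈ Finset.Ico 1 K, ((j:ℝ)⁻¹ - ((j:ℝ)+1)⁻¹) ≤ 1 := htel2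
          linarith
      _ = 3 + Real.log K := by ring
  calc ∑ p ∈ S, (p:ℝ)⁻¹
      ≤ (∑ p ∈ S, c p) * b K + ∑ j ∈ Finset.Ico 1 K, ∑ p ∈ S,
        (if Nat.log 2 p ≤ j then c p * (b j - b (j+1)) else 0) := by
        rw [← step2]; exact step1
    _ ≤ 4 + (3 + Real.log K) := add_le_add hhead hcolsum
    _ = 7 + Real.log K := by ring

lemma aux_mertens3 (y : ℕ) (hy : 2 ≤ y) :
    ∑ p ∈ Nat.primesBelow (y+1), ((p:ℝ))⁻¹ ≤ 7 + Real.log (Nat.log 2 y) := by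
  have hK : 1 ≤ Nat.log 2 y := Nat.log_pos (by norm_num) hy
  have hlt : y < 2 ^ (Nat.log 2 y + 1) := Nat.lt_pow_succ_log_self (by norm_num) y
  refine le_trans (Finset.sum_le_sum_of_subset_of_nonneg ?_ ?_) (aux_mertens2 _ hK)
  · intro p hp
    rw [Nat.mem_primesBelow] at hp ⊢
    exact ⟨by omega, hp.2⟩
  · intro p _ _
    positivity

-- log log n ≥ 1/60 for n ≥ 3
lemma aux_loglog_lb (n : ℕ) (hn : 3 ≤ n) : 1/60 ≤ Real.log (Real.log n) := by
  have hlog2 : (0.6931471803:ℝ) < Real.log 2 := Real.log_two_gt_d9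
  have hlog32 : (1/3 : ℝ) ≤ Real.log (3/2) := by
    have h := Real.log_le_sub_one_of_pos (show (0:ℝ) < 2/3 by norm_num)
    have : Real.log (3/2) = - Real.log (2/3) := by
      rw [← Real.log_inv]; norm_num
    rw [this]; linarith
  have hlog3 : (1.02:ℝ) ≤ Real.log 3 := by
    have : Real.log 3 = Real.log 2 + Real.log (3/2) := by
      rw [← Real.log_mul (by norm_num) (by norm_num)]; norm_num
    rw [this]; linarith
  have hn3 : (3:ℝ) ≤ n := by exact_mod_cast hn
  have hlogn : (1.02:ℝ) ≤ Real.log n :=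
    le_trans hlog3 (Real.log_le_log (by norm_num) hn3)
  have hlogn0 : (0:ℝ) < Real.log n := by linarith
  have h := Real.log_le_sub_one_of_pos (show (0:ℝ) < (Real.log n)⁻¹ by positivity)
  rw [Real.log_inv] at h
  have hinv : (Real.log n)⁻¹ ≤ 1/1.02 := by
    rw [inv_le_comm₀ hlogn0 (by norm_num)]
    linarith [hlogn]
  linarith

/-- There is a constant `K` such that for all integers `n ≥ 3`,
`∏_{p | n} (1 + 1/p) ≤ K · log log n`. -/
theorem prod_one_add_inv_prime_le : ∃ K : ℝ, ∀ n : ℕ, 3 ≤ n →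
    ∏ p ∈ n.primeFactors, (1 + (p : ℝ)⁻¹) ≤ K * Real.log (Real.log n) := by
  use 1000000
  intro n hn
  have hll := aux_loglog_lb n hn
  have hlog2 : (0.6931471803:ℝ) < Real.log 2 := Real.log_two_gt_d9
  have hlog2' : (0:ℝ) < Real.log 2 := by linarith
  rcases Nat.lt_or_ge n 4 with hn4 | hn4
  · -- n = 3
    have hn3 : n = 3 := by omega
    subst hn3
    have h3 : Nat.primeFactors 3 = {3} := Nat.Prime.primeFactors (by norm_num)
    rw [h3, Finset.prod_singleton]
    have h43 : (1:ℝ) + (3:ℝ)⁻¹ ≤ 2 := by norm_num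
    linarith
  · -- n ≥ 4
    set y := Nat.log 2 n with hy
    have hn0 : n ≠ 0 := by omega
    have hy2 : 2 ≤ y := by
      rw [hy, Nat.le_log_iff_pow_le (by norm_num) hn0]
      omega
    set KK := Nat.log 2 y with hKK
    have hKK1 : 1 ≤ KK := Nat.log_pos (by norm_num) hy2
    have hKK0 : (0:ℝ) < (KK:ℝ) := by exact_mod_cast hKK1
    set S := n.primeFactors with hS
    set S₁ := S.filter (fun p => p ≤ y) with hS1
    set S₂ := S.filter (fun p => ¬ p ≤ y) with hS2
    have hsplit : ∏ p ∈ S, (1 + (p:ℝ)⁻¹)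
        = (∏ p ∈ S₁, (1 + (p:ℝ)⁻¹)) * ∏ p ∈ S₂, (1 + (p:ℝ)⁻¹) :=
      (Finset.prod_filter_mul_prod_filter_not S _ _).symm
    -- small primes
    have hA : ∏ p ∈ S₁, (1 + (p:ℝ)⁻¹) ≤ Real.exp 7 * KK := by
      have h1 : ∏ p ∈ S₁, (1 + (p:ℝ)⁻¹) ≤ ∏ p ∈ S₁, Real.exp ((p:ℝ)⁻¹) := by
        refine Finset.prod_le_prod (fun p _ => by positivity) (fun p _ => ?_)
        linarith [Real.add_one_le_exp ((p:ℝ)⁻¹)]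
      have h2 : ∏ p ∈ S₁, Real.exp ((p:ℝ)⁻¹) = Real.exp (∑ p ∈ S₁, (p:ℝ)⁻¹) :=
        (Real.exp_sum _ _).symm
      have h3 : ∑ p ∈ S₁, (p:ℝ)⁻¹ ≤ ∑ p ∈ Nat.primesBelow (y+1), (p:ℝ)⁻¹ := by
        refine Finset.sum_le_sum_of_subset_of_nonneg ?_ (fun p _ _ => by positivity)
        intro p hp
        rw [hS1, Finset.mem_filter] at hp
        exact Nat.mem_primesBelow.mpr ⟨by omega, Nat.prime_of_mem_primeFactors hp.1⟩
      have h4 := aux_mertens3 y hy2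
      calc ∏ p ∈ S₁, (1 + (p:ℝ)⁻¹) ≤ Real.exp (∑ p ∈ S₁, (p:ℝ)⁻¹) := by
            rw [← h2]; exact h1
        _ ≤ Real.exp (7 + Real.log KK) := Real.exp_le_exp.mpr (le_trans h3 h4)
        _ = Real.exp 7 * KK := by
            rw [Real.exp_add, Real.exp_log hKK0]
    -- large primes
    have hB : ∏ p ∈ S₂, (1 + (p:ℝ)⁻¹) ≤ Real.exp 1 := by
      have hple : ∀ p ∈ S₂, y + 1 ≤ p := by
        intro p hp
        rw [hS2, Finset.mem_filter] at hp
        omega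
      have hdvd : ∏ p ∈ S₂, p ∣ n :=
        dvd_trans (Finset.prod_dvd_prod_of_subset _ _ _ (Finset.filter_subset _ _))
          (Nat.prod_primeFactors_dvd n)
      have hprodle : (y+1) ^ S₂.card ≤ n :=
        le_trans (Finset.pow_card_le_prod _ _ _ hple) (Nat.le_of_dvd (by omega) hdvd)
      have hnlt : n < 2 ^ (y+1) := Nat.lt_pow_succ_log_self (by norm_num) n
      have h2y : (2:ℕ) ^ (y+1) ≤ (y+1) ^ (y+1) := Nat.pow_le_pow_left (by omega) _
      have hcard : S₂.card < y + 1 := by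
        have hlt : (y+1) ^ S₂.card < (y+1) ^ (y+1) := by omega
        exact (Nat.pow_lt_pow_iff_right (by omega)).mp hlt
      have hy1 : (0:ℝ) < (y:ℝ) + 1 := by positivity
      have h1 : ∏ p ∈ S₂, (1 + (p:ℝ)⁻¹) ≤ ∏ _p ∈ S₂, Real.exp (((y:ℝ)+1)⁻¹) := by
        refine Finset.prod_le_prod (fun p _ => by positivity) (fun p hp => ?_)
        have hpy : ((y:ℝ)+1) ≤ p := by exact_mod_cast hple p hp
        have hp0 : (0:ℝ) < p := by linarith
        have hpi : (p:ℝ)⁻¹ ≤ ((y:ℝ)+1)⁻¹ := inv_anti₀ hy1 hpy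
        linarith [Real.add_one_le_exp (((y:ℝ)+1)⁻¹)]
      have h2 : ∏ _p ∈ S₂, Real.exp (((y:ℝ)+1)⁻¹)
          = Real.exp ((S₂.card : ℝ) * ((y:ℝ)+1)⁻¹) := by
        rw [Finset.prod_const, ← Real.exp_nat_mul]
      have h3 : (S₂.card : ℝ) * ((y:ℝ)+1)⁻¹ ≤ 1 := by
        have hc : (S₂.card : ℝ) ≤ (y:ℝ) + 1 := by exact_mod_cast hcard.le
        calc (S₂.card : ℝ) * ((y:ℝ)+1)⁻¹ ≤ ((y:ℝ)+1) * ((y:ℝ)+1)⁻¹ :=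
              mul_le_mul_of_nonneg_right hc (by positivity)
          _ = 1 := mul_inv_cancel₀ hy1.ne'
      calc ∏ p ∈ S₂, (1 + (p:ℝ)⁻¹) ≤ Real.exp ((S₂.card : ℝ) * ((y:ℝ)+1)⁻¹) := by
            rw [← h2]; exact h1
        _ ≤ Real.exp 1 := Real.exp_le_exp.mpr h3
    -- bound KK by log log n
    have hlogn1 : (1:ℝ) < Real.log n := by
      rw [Real.lt_log_iff_exp_lt (by positivity)]
      have h1 := Real.exp_one_lt_d9
      have h2 : (4:ℝ) ≤ n := by exact_mod_cast hn4
      linarith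
    have hlogn0 : (0:ℝ) < Real.log n := by linarith
    have hKKbound : (KK:ℝ) * Real.log 2 ≤ Real.log (Real.log n) + 0.45 := by
      have h1 : (2:ℕ) ^ KK ≤ y := Nat.pow_log_le_self 2 (by omega)
      have h1' : ((2:ℝ)) ^ KK ≤ (y:ℝ) := by exact_mod_cast h1
      have hKlog : (KK:ℝ) * Real.log 2 ≤ Real.log y := by
        have h := Real.log_le_log (by positivity) h1'
        rwa [Real.log_pow] at h
      have h2 : (2:ℕ) ^ y ≤ n := Nat.pow_log_le_self 2 hn0
      have h2' : ((2:ℝ)) ^ y ≤ (n:ℝ) := by exact_mod_cast h2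
      have hylog : (y:ℝ) * Real.log 2 ≤ Real.log n := by
        have h := Real.log_le_log (by positivity) h2'
        rwa [Real.log_pow] at h
      have hy0 : (0:ℝ) < y := by exact_mod_cast (by omega : 0 < y)
      have hyle : (y:ℝ) ≤ Real.log n / Real.log 2 := by
        rw [le_div_iff₀ hlog2']; linarith
      have hlogy : Real.log y ≤ Real.log (Real.log n / Real.log 2) :=
        Real.log_le_log hy0 hyle
      have hdiv : Real.log (Real.log n / Real.log 2)
          = Real.log (Real.log n) - Real.log (Real.log 2) :=
        Real.log_div hlogn0.ne' hlog2'.ne'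
      have hll2 : -Real.log (Real.log 2) ≤ 0.45 := by
        have hi : Real.log ((Real.log 2)⁻¹) ≤ (Real.log 2)⁻¹ - 1 :=
          Real.log_le_sub_one_of_pos (by positivity)
        rw [Real.log_inv] at hi
        have : (Real.log 2)⁻¹ ≤ 1/0.6931471803 := by
          rw [inv_le_comm₀ hlog2' (by norm_num)]
          rw [div_le_iff₀ (by norm_num)] at *
          nlinarith
        nlinarith
      linarith
    have hexp8 : Real.exp 8 ≤ 2981 := by
      have he : Real.exp 8 = Real.exp 1 ^ (8:ℕ) := by
        rw [← Real.exp_nat_mul]; norm_num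
      have hb : Real.exp 1 ^ (8:ℕ) ≤ (2.7182818286:ℝ) ^ (8:ℕ) :=
        pow_le_pow_left₀ (Real.exp_pos 1).le Real.exp_one_lt_d9.le 8
      rw [he]
      refine le_trans hb (by norm_num)
    -- final combination
    have hfin : ∏ p ∈ S, (1 + (p:ℝ)⁻¹) ≤ Real.exp 8 * KK := by
      rw [hsplit]
      have hB0 : (0:ℝ) ≤ ∏ p ∈ S₂, (1 + (p:ℝ)⁻¹) :=
        Finset.prod_nonneg fun p _ => by positivity
      have hA0 : (0:ℝ) ≤ Real.exp 7 * KK := by positivity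
      calc (∏ p ∈ S₁, (1 + (p:ℝ)⁻¹)) * ∏ p ∈ S₂, (1 + (p:ℝ)⁻¹)
          ≤ (Real.exp 7 * KK) * Real.exp 1 := mul_le_mul hA hB hB0 hA0
        _ = Real.exp 8 * KK := by
            rw [show (8:ℝ) = 7 + 1 by norm_num, Real.exp_add]; ring
    have hKK2 : (KK:ℝ) * 0.6931471803 ≤ Real.log (Real.log n) + 0.45 := by
      nlinarith
    have h29 : Real.exp 8 * KK ≤ 2981 * KK :=
      mul_le_mul_of_nonneg_right hexp8 hKK0.le
    calc ∏ p ∈ S, (1 + (p:ℝ)⁻¹) ≤ Real.exp 8 * KK := hfin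
      _ ≤ 2981 * KK := h29
      _ ≤ 1000000 * Real.log (Real.log n) := by nlinarith [hll, hKK2]
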